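/- The model {P_θ : θ ∈ Θ} is differentiable in quadratic mean: for every θ₀ in the interior of Θ, with score function ℓ_{θ₀}(y,g) = φ·g₁(g)·φ(y|θ₀)·(y−θ₀)/p_{θ₀}(y,g), one has ∫_{[0,1]} ∫_ℝ ( √(p_{θ₀+t}(y,g)) − √(p_{θ₀}(y,g)) − (1/2)·t·ℓ_{θ₀}(y,g)·√(p_{θ₀}(y,g)) )² dy dg = o(t²) as t → 0. -/

import Mathlib

open MeasureTheory Filter Asymptotics

/-- The `N(θ,1)` density `φ(y|θ)`. -/
noncomputable def npdf (y θ : ℝ) : ℝ :=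
  Real.exp (-(y - θ) ^ 2 / 2) / Real.sqrt (2 * Real.pi)

noncomputable def Dfun (s : ℝ) : ℝ := 2 * Real.exp (-s ^ 2 / 8) * (2 * s ^ 2 + 3)

-- derivative of npdf in θ
lemma npdf_hasDerivAt (y θ : ℝ) :
    HasDerivAt (fun θ => npdf y θ) (npdf y θ * (y - θ)) θ := by
  have h1 : HasDerivAt (fun θ : ℝ => y - θ) (-1) θ := (hasDerivAt_id θ).const_sub y
  have h2 : HasDerivAt (fun θ : ℝ => -(y - θ) ^ 2 / 2) (y - θ) θ := by
    have := ((h1.pow 2).neg).div_const 2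
    exact this.congr_deriv (by ring)
  have h4 := (h2.exp).div_const (Real.sqrt (2 * Real.pi))
  exact h4.congr_deriv (by unfold npdf; ring)

lemma npdf_pos (y θ : ℝ) : 0 < npdf y θ :=
  div_pos (Real.exp_pos _) (Real.sqrt_pos.mpr (by positivity))

lemma npdf_sqrt_le (y θ : ℝ) : Real.sqrt (npdf y θ) ≤ Real.exp (-(y - θ) ^ 2 / 4) := by
  have h1 : npdf y θ ≤ Real.exp (-(y - θ) ^ 2 / 2) := by
    unfold npdf
    apply div_le_self (Real.exp_pos _).le
    rw [Real.one_le_sqrt]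
    nlinarith [Real.pi_gt_three]
  calc Real.sqrt (npdf y θ) ≤ Real.sqrt (Real.exp (-(y - θ) ^ 2 / 2)) := Real.sqrt_le_sqrt h1
    _ = Real.exp (-(y - θ) ^ 2 / 2 / 2) := (Real.exp_half _).symm
    _ = Real.exp (-(y - θ) ^ 2 / 4) := by ring_nf

lemma exp_quarter_le_two : Real.exp (1/4 : ℝ) ≤ 2 := by
  have h := Real.add_one_le_exp (-(1/4) : ℝ)
  have h2 : (3/4 : ℝ) ≤ Real.exp (-(1/4)) := by linarith
  have h3 : Real.exp (1/4 : ℝ) = (Real.exp (-(1/4)))⁻¹ := by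
    rw [← Real.exp_neg]; norm_num
  rw [h3]
  have : (Real.exp (-(1/4)))⁻¹ ≤ (3/4 : ℝ)⁻¹ :=
    inv_anti₀ (by norm_num) h2
  linarith

lemma dom_lemma (s d : ℝ) (hd : |d| ≤ 1) :
    Real.exp (-(s - d) ^ 2 / 4) * ((s - d) ^ 2 + 1) ≤ Dfun s := by
  have hd2 : d ^ 2 ≤ 1 := by nlinarith [abs_nonneg d, sq_abs d]
  have hw : (s - d) ^ 2 + 1 ≤ 2 * s ^ 2 + 3 := by nlinarith [sq_nonneg (s + d)]
  have hexp : Real.exp (-(s - d) ^ 2 / 4) ≤ 2 * Real.exp (-s ^ 2 / 8) := by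
    have h1 : -(s - d) ^ 2 / 4 ≤ 1/4 + -s ^ 2 / 8 := by nlinarith [sq_nonneg (s - 2*d)]
    calc Real.exp (-(s - d) ^ 2 / 4) ≤ Real.exp (1/4 + -s ^ 2 / 8) := Real.exp_le_exp.mpr h1
      _ = Real.exp (1/4) * Real.exp (-s ^ 2 / 8) := Real.exp_add _ _
      _ ≤ 2 * Real.exp (-s ^ 2 / 8) :=
          mul_le_mul_of_nonneg_right exp_quarter_le_two (Real.exp_pos _).le
  unfold Dfun
  calc Real.exp (-(s - d) ^ 2 / 4) * ((s - d) ^ 2 + 1)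
      ≤ (2 * Real.exp (-s ^ 2 / 8)) * (2 * s ^ 2 + 3) := by
        apply mul_le_mul hexp hw (by positivity) (by positivity)
    _ = 2 * Real.exp (-s ^ 2 / 8) * (2 * s ^ 2 + 3) := by ring

/-- Second-derivative bound: the messy algebra step. -/
lemma Ebound (w r u : ℝ) (hr : 0 < r) (hu : 0 < u) (hur : u ≤ r) :
    |(2 * u ^ 2 * (w ^ 2 - 1) * r ^ 2 - (u ^ 2 * w) ^ 2) / (4 * r ^ 3)| ≤ u * (w ^ 2 + 1) := by
  rw [abs_div, abs_of_pos (show (0:ℝ) < 4 * r ^ 3 by positivity),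
    div_le_iff₀ (by positivity : (0:ℝ) < 4 * r ^ 3)]
  have hu3 : u ^ 3 ≤ r ^ 3 := pow_le_pow_left₀ hu.le hur 3
  have hur2 : u ^ 2 * r ^ 2 ≤ u * r ^ 3 := by nlinarith [mul_le_mul_of_nonneg_right hur (mul_nonneg hu.le (sq_nonneg r))]
  have h1 := mul_le_mul_of_nonneg_right hur2 (sq_nonneg w)
  have h2 := mul_le_mul_of_nonneg_right hu3 (mul_nonneg hu.le (sq_nonneg w))
  have A : (0:ℝ) ≤ u * r ^ 3 * w ^ 2 := by positivity
  have B : (0:ℝ) < u ^ 2 * r ^ 2 := by positivity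
  have C : (0:ℝ) ≤ u ^ 4 * w ^ 2 := by positivity
  have Dq : (0:ℝ) ≤ u ^ 2 * w ^ 2 * r ^ 2 := by positivity
  have E : (0:ℝ) < u * r ^ 3 := by positivity
  rw [abs_le]
  constructor
  · nlinarith [h1, h2, A, B, C, Dq, E]
  · nlinarith [h1, h2, A, B, C, Dq, E]

lemma key_abs (a c θ₀ t y : ℝ) (ha : 0 ≤ a) (hc : 0 < c) (ht : |t| ≤ 1) :
    |Real.sqrt (a + c * npdf y (θ₀ + t)) - Real.sqrt (a + c * npdf y θ₀) -
      1 / 2 * t * (c * npdf y θ₀ * (y - θ₀) / (a + c * npdf y θ₀)) *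
        Real.sqrt (a + c * npdf y θ₀)|
      ≤ Real.sqrt c * Dfun (y - θ₀) * t ^ 2 := by
  have hq_pos : ∀ θ : ℝ, 0 < a + c * npdf y θ := fun θ =>
    add_pos_of_nonneg_of_pos ha (mul_pos hc (npdf_pos y θ))
  set q : ℝ → ℝ := fun θ => a + c * npdf y θ with hq_def
  set h1 : ℝ → ℝ := fun θ => c * (npdf y θ * (y - θ)) / (2 * Real.sqrt (q θ)) with hh1_def
  set E : ℝ → ℝ := fun θ =>
    (c * (npdf y θ * ((y - θ) ^ 2 - 1)) * (2 * Real.sqrt (q θ)) -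
      c * (npdf y θ * (y - θ)) * (2 * (c * (npdf y θ * (y - θ)) / (2 * Real.sqrt (q θ))))) /
      (2 * Real.sqrt (q θ)) ^ 2 with hE_def
  have hq_deriv : ∀ θ : ℝ, HasDerivAt q (c * (npdf y θ * (y - θ))) θ := fun θ =>
    ((npdf_hasDerivAt y θ).const_mul c).const_add a
  have hsqrt_pos : ∀ θ : ℝ, 0 < Real.sqrt (q θ) := fun θ => Real.sqrt_pos.mpr (hq_pos θ)
  have hh : ∀ θ : ℝ, HasDerivAt (fun θ => Real.sqrt (q θ)) (h1 θ) θ := fun θ =>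
    (hq_deriv θ).sqrt (hq_pos θ).ne'
  have hnum : ∀ θ : ℝ, HasDerivAt (fun θ => c * (npdf y θ * (y - θ)))
      (c * (npdf y θ * ((y - θ) ^ 2 - 1))) θ := fun θ => by
    have hd : HasDerivAt (fun θ : ℝ => y - θ) (-1) θ := (hasDerivAt_id θ).const_sub y
    have := ((npdf_hasDerivAt y θ).mul hd).const_mul c
    exact this.congr_deriv (by ring)
  have hden : ∀ θ : ℝ, HasDerivAt (fun θ => 2 * Real.sqrt (q θ))
      (2 * (c * (npdf y θ * (y - θ)) / (2 * Real.sqrt (q θ)))) θ := fun θ =>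
    ((hq_deriv θ).sqrt (hq_pos θ).ne').const_mul 2
  have hh1 : ∀ θ : ℝ, HasDerivAt h1 (E θ) θ := fun θ =>
    (hnum θ).div (hden θ) (mul_pos two_pos (hsqrt_pos θ)).ne'
  -- bound on E
  have hEbd : ∀ θ : ℝ, |θ - θ₀| ≤ 1 → |E θ| ≤ Real.sqrt c * Dfun (y - θ₀) := by
    intro θ hθ
    set m := npdf y θ with hm_def
    set r := Real.sqrt (q θ) with hr_def
    set w := y - θ with hw_def
    set u := Real.sqrt (c * m) with hu_def
    have hm : 0 < m := npdf_pos y θ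
    have hr : 0 < r := hsqrt_pos θ
    have hu : 0 < u := Real.sqrt_pos.mpr (mul_pos hc hm)
    have hu2 : u ^ 2 = c * m := Real.sq_sqrt (mul_pos hc hm).le
    have hur : u ≤ r := by
      rw [hu_def, hr_def]
      exact Real.sqrt_le_sqrt (by simp [hq_def]; linarith)
    have hEeq : E θ = (2 * u ^ 2 * (w ^ 2 - 1) * r ^ 2 - (u ^ 2 * w) ^ 2) / (4 * r ^ 3) := by
      rw [hE_def, hu2]
      show (c * (m * (w ^ 2 - 1)) * (2 * r) - c * (m * w) * (2 * (c * (m * w) / (2 * r)))) / (2 * r) ^ 2 = _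
      have hr0 : r ≠ 0 := hr.ne'
      field_simp
      ring
    rw [hEeq]
    refine (Ebound w r u hr hu hur).trans ?_
    have husplit : u ≤ Real.sqrt c * Real.exp (-w ^ 2 / 4) := by
      rw [hu_def, Real.sqrt_mul hc.le]
      exact mul_le_mul_of_nonneg_left (npdf_sqrt_le y θ) (Real.sqrt_nonneg c)
    calc u * (w ^ 2 + 1) ≤ (Real.sqrt c * Real.exp (-w ^ 2 / 4)) * (w ^ 2 + 1) :=
          mul_le_mul_of_nonneg_right husplit (by positivity)
      _ = Real.sqrt c * (Real.exp (-w ^ 2 / 4) * (w ^ 2 + 1)) := by ring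
      _ ≤ Real.sqrt c * Dfun (y - θ₀) := by
          apply mul_le_mul_of_nonneg_left _ (Real.sqrt_nonneg c)
          have : w = (y - θ₀) - (θ - θ₀) := by rw [hw_def]; ring
          rw [this]
          exact dom_lemma (y - θ₀) (θ - θ₀) hθ
  -- the interval
  set M := Real.sqrt c * Dfun (y - θ₀) with hM_def
  have hM : 0 ≤ M := by
    rw [hM_def]
    have : 0 ≤ Dfun (y - θ₀) := by unfold Dfun; positivity
    positivity
  set s₁ : Set ℝ := Set.Icc (min θ₀ (θ₀ + t)) (max θ₀ (θ₀ + t)) with hs₁_def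
  have hmem₀ : θ₀ ∈ s₁ := ⟨min_le_left _ _, le_max_left _ _⟩
  have hmem₁ : θ₀ + t ∈ s₁ := ⟨min_le_right _ _, le_max_right _ _⟩
  have habs : ∀ θ ∈ s₁, |θ - θ₀| ≤ |t| := by
    intro θ hθ
    have h1' : θ₀ - |t| ≤ min θ₀ (θ₀ + t) :=
      le_min (by linarith [abs_nonneg t]) (by linarith [neg_abs_le t])
    have h2' : max θ₀ (θ₀ + t) ≤ θ₀ + |t| :=
      max_le (by linarith [abs_nonneg t]) (by linarith [le_abs_self t])
    rw [abs_le]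
    constructor <;> [linarith [hθ.1]; linarith [hθ.2]]
  -- Step A: h1 is M-Lipschitz-at-θ₀ on s₁
  have stepA : ∀ θ ∈ s₁, |h1 θ - h1 θ₀| ≤ M * |t| := by
    intro θ hθ
    have := Convex.norm_image_sub_le_of_norm_hasDerivWithin_le
      (f := h1) (f' := E) (s := s₁) (C := M)
      (fun x _ => (hh1 x).hasDerivWithinAt)
      (fun x hx => by
        rw [Real.norm_eq_abs]
        exact hEbd x ((habs x hx).trans ht))
      (convex_Icc _ _) hmem₀ hθ
    rw [Real.norm_eq_abs, Real.norm_eq_abs] at this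
    exact this.trans (mul_le_mul_of_nonneg_left (habs θ hθ) hM)
  -- Step B
  have stepB : |Real.sqrt (q (θ₀ + t)) - Real.sqrt (q θ₀) - t * h1 θ₀| ≤ M * |t| * |t| := by
    have hf : ∀ x ∈ s₁, HasDerivWithinAt (fun θ => Real.sqrt (q θ) - θ * h1 θ₀)
        (h1 x - h1 θ₀) s₁ x := fun x _ =>
      ((hh x).sub (hasDerivAt_mul_const (h1 θ₀))).hasDerivWithinAt
    have := Convex.norm_image_sub_le_of_norm_hasDerivWithin_le
      (f := fun θ => Real.sqrt (q θ) - θ * h1 θ₀) (f' := fun x => h1 x - h1 θ₀)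
      (s := s₁) (C := M * |t|) hf
      (fun x hx => by rw [Real.norm_eq_abs]; exact stepA x hx)
      (convex_Icc _ _) hmem₀ hmem₁
    rw [Real.norm_eq_abs, Real.norm_eq_abs] at this
    have heq : Real.sqrt (q (θ₀ + t)) - (θ₀ + t) * h1 θ₀ - (Real.sqrt (q θ₀) - θ₀ * h1 θ₀)
        = Real.sqrt (q (θ₀ + t)) - Real.sqrt (q θ₀) - t * h1 θ₀ := by ring
    rw [heq] at this
    simpa using this
  -- identify score term with t * h1 θ₀
  have hgen : ∀ X Q : ℝ, 0 < Q →
      1 / 2 * t * (X / Q) * Real.sqrt Q = t * (X / (2 * Real.sqrt Q)) := by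
    intro X Q hQ'
    set r := Real.sqrt Q with hr_def
    have hr : 0 < r := Real.sqrt_pos.mpr hQ'
    have hr2 : r ^ 2 = Q := Real.sq_sqrt hQ'.le
    rw [← hr2]
    field_simp
  have hscore_eq : 1 / 2 * t * (c * npdf y θ₀ * (y - θ₀) / (a + c * npdf y θ₀)) *
      Real.sqrt (a + c * npdf y θ₀) = t * h1 θ₀ := by
    have h0 := hgen (c * (npdf y θ₀ * (y - θ₀))) (a + c * npdf y θ₀) (hq_pos θ₀)
    calc 1 / 2 * t * (c * npdf y θ₀ * (y - θ₀) / (a + c * npdf y θ₀)) *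
        Real.sqrt (a + c * npdf y θ₀)
        = 1 / 2 * t * (c * (npdf y θ₀ * (y - θ₀)) / (a + c * npdf y θ₀)) *
          Real.sqrt (a + c * npdf y θ₀) := by ring
      _ = t * (c * (npdf y θ₀ * (y - θ₀)) / (2 * Real.sqrt (a + c * npdf y θ₀))) := h0
      _ = t * h1 θ₀ := by simp only [hh1_def, hq_def]
  rw [hscore_eq]
  have hstep : M * |t| * |t| ≤ M * t ^ 2 :=
    le_of_eq (by rw [mul_assoc, abs_mul_abs_self, ← sq])
  calc |Real.sqrt (a + c * npdf y (θ₀ + t)) - Real.sqrt (a + c * npdf y θ₀) - t * h1 θ₀|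
      = |Real.sqrt (q (θ₀ + t)) - Real.sqrt (q θ₀) - t * h1 θ₀| := by simp only [hq_def]
    _ ≤ M * |t| * |t| := stepB
    _ ≤ M * t ^ 2 := hstep
    _ = Real.sqrt c * Dfun (y - θ₀) * t ^ 2 := by rw [hM_def]

lemma Dfun_sq_int (θ₀ : ℝ) : Integrable (fun y => (Dfun (y - θ₀)) ^ 2) := by
  have base : Integrable (fun x : ℝ => 4096 * Real.exp (-(1/8) * x ^ 2)) :=
    (integrable_exp_neg_mul_sq (by norm_num : (0:ℝ) < 1/8)).const_mul 4096
  have base2 : Integrable (fun y : ℝ => 4096 * Real.exp (-(1/8) * (y - θ₀) ^ 2)) :=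
    base.comp_sub_right θ₀
  apply base2.mono'
  · apply Continuous.aestronglyMeasurable
    unfold Dfun
    fun_prop
  · refine ae_of_all _ fun y => ?_
    set s := y - θ₀ with hs_def
    have hpos : (0:ℝ) < Dfun s := by unfold Dfun; positivity
    rw [Real.norm_eq_abs, abs_of_pos (by positivity : (0:ℝ) < Dfun s ^ 2)]
    unfold Dfun
    have h16 := Real.add_one_le_exp (s ^ 2 / 16)
    have hsq16 : (1 + s ^ 2 / 16) ^ 2 ≤ Real.exp (s ^ 2 / 8) := by
      have he : Real.exp (s ^ 2 / 8) = Real.exp (s ^ 2 / 16) * Real.exp (s ^ 2 / 16) := by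
        rw [← Real.exp_add]; ring_nf
      rw [he]
      nlinarith [sq_nonneg s, Real.exp_pos (s ^ 2 / 16)]
    have hkey : (2 * s ^ 2 + 3) ^ 2 ≤ 1024 * Real.exp (s ^ 2 / 8) := by
      nlinarith [sq_nonneg s, sq_nonneg (s^2)]
    have hinv : Real.exp (-s ^ 2 / 8) * Real.exp (s ^ 2 / 8) = 1 := by
      rw [← Real.exp_add]; ring_nf; exact Real.exp_zero
    have hmul : (2 * s ^ 2 + 3) ^ 2 * Real.exp (-s ^ 2 / 8) ≤ 1024 := by
      calc (2 * s ^ 2 + 3) ^ 2 * Real.exp (-s ^ 2 / 8)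
          ≤ (1024 * Real.exp (s ^ 2 / 8)) * Real.exp (-s ^ 2 / 8) :=
            mul_le_mul_of_nonneg_right hkey (Real.exp_pos _).le
        _ = 1024 * (Real.exp (-s ^ 2 / 8) * Real.exp (s ^ 2 / 8)) := by ring
        _ = 1024 := by rw [hinv]; ring
    have hexp8 : (0:ℝ) < Real.exp (-s ^ 2 / 8) := Real.exp_pos _
    have : (2 * Real.exp (-s ^ 2 / 8) * (2 * s ^ 2 + 3)) ^ 2
        = 4 * Real.exp (-s ^ 2 / 8) * ((2 * s ^ 2 + 3) ^ 2 * Real.exp (-s ^ 2 / 8)) := by ring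
    rw [this]
    calc 4 * Real.exp (-s ^ 2 / 8) * ((2 * s ^ 2 + 3) ^ 2 * Real.exp (-s ^ 2 / 8))
        ≤ 4 * Real.exp (-s ^ 2 / 8) * 1024 :=
          mul_le_mul_of_nonneg_left hmul (by positivity)
      _ = 4096 * Real.exp (-(1/8) * s ^ 2) := by ring_nf

/-- The model `{P_θ}` given by `p_θ(y,g) = (1−φ)·g₀(g)·φ(y|0) + φ·g₁(g)·φ(y|θ)` is
differentiable in quadratic mean at every `θ₀` in the interior of `Θ = [−K,K]`, with score
`ℓ_{θ₀}(y,g) = φ·g₁(g)·φ(y|θ₀)·(y−θ₀)/p_{θ₀}(y,g)`: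
`∫∫ (√p_{θ₀+t} − √p_{θ₀} − ½ t ℓ_{θ₀} √p_{θ₀})² dy dg = o(t²)` as `t → 0`. -/
theorem stmt18 (φ : ℝ) (hφ : φ ∈ Set.Ioo (0 : ℝ) 1) (K : ℝ) (hK : 0 < K)
    (g₀ g₁ : ℝ → ℝ) (hg₀m : Measurable g₀) (hg₁m : Measurable g₁)
    (hg₀nn : ∀ x, 0 ≤ g₀ x) (hg₁nn : ∀ x, 0 ≤ g₁ x)
    (hg₀int : ∫ x in Set.Icc (0 : ℝ) 1, g₀ x = 1)
    (hg₁int : ∫ x in Set.Icc (0 : ℝ) 1, g₁ x = 1)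
    (p : ℝ → ℝ × ℝ → ℝ)
    (hp : ∀ θ y g, p θ (y, g) = (1 - φ) * g₀ g * npdf y 0 + φ * g₁ g * npdf y θ)
    (score : ℝ → ℝ × ℝ → ℝ)
    (hscore : ∀ θ₀ y g, score θ₀ (y, g) = φ * g₁ g * npdf y θ₀ * (y - θ₀) / p θ₀ (y, g)) :
    ∀ θ₀ ∈ Set.Ioo (-K) K,
      (fun t : ℝ =>
          ∫ g in Set.Icc (0 : ℝ) 1, ∫ y : ℝ,
            (Real.sqrt (p (θ₀ + t) (y, g)) - Real.sqrt (p θ₀ (y, g)) -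
              (1 / 2) * t * score θ₀ (y, g) * Real.sqrt (p θ₀ (y, g))) ^ 2)
        =o[nhds 0] fun t : ℝ => t ^ 2 := by
  intro θ₀ _
  obtain ⟨hφ0, hφ1⟩ := hφ
  have hg₁i : IntegrableOn g₁ (Set.Icc (0:ℝ) 1) := by
    by_contra hcon
    rw [integral_undef hcon] at hg₁int
    norm_num at hg₁int
  have hD := Dfun_sq_int θ₀
  set C₁ := ∫ y : ℝ, (Dfun (y - θ₀)) ^ 2 with hC₁def
  have hC₁ : 0 ≤ C₁ := integral_nonneg fun y => sq_nonneg _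
  -- pointwise bound
  have hkey : ∀ t : ℝ, |t| ≤ 1 → ∀ g y : ℝ,
      (Real.sqrt (p (θ₀ + t) (y, g)) - Real.sqrt (p θ₀ (y, g)) -
        (1 / 2) * t * score θ₀ (y, g) * Real.sqrt (p θ₀ (y, g))) ^ 2
        ≤ t ^ 4 * (φ * g₁ g) * (Dfun (y - θ₀)) ^ 2 := by
    intro t ht g y
    rcases eq_or_lt_of_le (hg₁nn g) with h0 | hpos
    · have hg1 : g₁ g = 0 := h0.symm
      simp only [hscore, hp, hg1]
      simp [mul_zero, zero_mul, add_zero, zero_div]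
    · have hc : 0 < φ * g₁ g := mul_pos hφ0 hpos
      have ha : 0 ≤ (1 - φ) * g₀ g * npdf y 0 :=
        mul_nonneg (mul_nonneg (by linarith) (hg₀nn g)) (npdf_pos y 0).le
      have habs := key_abs ((1 - φ) * g₀ g * npdf y 0) (φ * g₁ g) θ₀ t y ha hc ht
      simp only [hscore, hp]
      calc (Real.sqrt ((1 - φ) * g₀ g * npdf y 0 + φ * g₁ g * npdf y (θ₀ + t)) -
              Real.sqrt ((1 - φ) * g₀ g * npdf y 0 + φ * g₁ g * npdf y θ₀) -
              1 / 2 * t * (φ * g₁ g * npdf y θ₀ * (y - θ₀) /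
                ((1 - φ) * g₀ g * npdf y 0 + φ * g₁ g * npdf y θ₀)) *
              Real.sqrt ((1 - φ) * g₀ g * npdf y 0 + φ * g₁ g * npdf y θ₀)) ^ 2
          = |Real.sqrt ((1 - φ) * g₀ g * npdf y 0 + φ * g₁ g * npdf y (θ₀ + t)) -
              Real.sqrt ((1 - φ) * g₀ g * npdf y 0 + φ * g₁ g * npdf y θ₀) -
              1 / 2 * t * (φ * g₁ g * npdf y θ₀ * (y - θ₀) /
                ((1 - φ) * g₀ g * npdf y 0 + φ * g₁ g * npdf y θ₀)) *
              Real.sqrt ((1 - φ) * g₀ g * npdf y 0 + φ * g₁ g * npdf y θ₀)| ^ 2 :=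
            (sq_abs _).symm
        _ ≤ (Real.sqrt (φ * g₁ g) * Dfun (y - θ₀) * t ^ 2) ^ 2 :=
            pow_le_pow_left₀ (abs_nonneg _) habs 2
        _ = Real.sqrt (φ * g₁ g) ^ 2 * Dfun (y - θ₀) ^ 2 * t ^ 4 := by ring
        _ = t ^ 4 * (φ * g₁ g) * (Dfun (y - θ₀)) ^ 2 := by
            rw [Real.sq_sqrt hc.le]; ring
  -- integral bound
  have hFnn : ∀ t : ℝ, 0 ≤ ∫ g in Set.Icc (0:ℝ) 1, ∫ y : ℝ,
      (Real.sqrt (p (θ₀ + t) (y, g)) - Real.sqrt (p θ₀ (y, g)) -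
        (1 / 2) * t * score θ₀ (y, g) * Real.sqrt (p θ₀ (y, g))) ^ 2 := fun t =>
    integral_nonneg fun g => integral_nonneg fun y => sq_nonneg _
  have hFle : ∀ t : ℝ, |t| ≤ 1 →
      (∫ g in Set.Icc (0:ℝ) 1, ∫ y : ℝ,
        (Real.sqrt (p (θ₀ + t) (y, g)) - Real.sqrt (p θ₀ (y, g)) -
          (1 / 2) * t * score θ₀ (y, g) * Real.sqrt (p θ₀ (y, g))) ^ 2)
        ≤ t ^ 4 * φ * C₁ := by
    intro t ht
    have hinner : ∀ g : ℝ, (∫ y : ℝ,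
        (Real.sqrt (p (θ₀ + t) (y, g)) - Real.sqrt (p θ₀ (y, g)) -
          (1 / 2) * t * score θ₀ (y, g) * Real.sqrt (p θ₀ (y, g))) ^ 2)
        ≤ t ^ 4 * φ * C₁ * g₁ g := by
      intro g
      have hmono := integral_mono_of_nonneg
        (ae_of_all _ fun y => sq_nonneg _)
        (hD.const_mul (t ^ 4 * (φ * g₁ g)))
        (ae_of_all _ fun y => hkey t ht g y)
      calc (∫ y : ℝ, (Real.sqrt (p (θ₀ + t) (y, g)) - Real.sqrt (p θ₀ (y, g)) -
            (1 / 2) * t * score θ₀ (y, g) * Real.sqrt (p θ₀ (y, g))) ^ 2)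
          ≤ ∫ y : ℝ, t ^ 4 * (φ * g₁ g) * (Dfun (y - θ₀)) ^ 2 := hmono
        _ = t ^ 4 * (φ * g₁ g) * C₁ := by rw [integral_const_mul]
        _ = t ^ 4 * φ * C₁ * g₁ g := by ring
    have houter := integral_mono_of_nonneg
      (ae_of_all _ fun g => integral_nonneg fun y => sq_nonneg _)
      (hg₁i.const_mul (t ^ 4 * φ * C₁))
      (ae_of_all _ fun g => hinner g)
    calc (∫ g in Set.Icc (0:ℝ) 1, ∫ y : ℝ,
          (Real.sqrt (p (θ₀ + t) (y, g)) - Real.sqrt (p θ₀ (y, g)) -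
            (1 / 2) * t * score θ₀ (y, g) * Real.sqrt (p θ₀ (y, g))) ^ 2)
        ≤ ∫ g in Set.Icc (0:ℝ) 1, t ^ 4 * φ * C₁ * g₁ g := houter
      _ = t ^ 4 * φ * C₁ * ∫ g in Set.Icc (0:ℝ) 1, g₁ g := by rw [integral_const_mul]
      _ = t ^ 4 * φ * C₁ := by rw [hg₁int, mul_one]
  -- conclude
  have hBigO : (fun t : ℝ =>
      ∫ g in Set.Icc (0:ℝ) 1, ∫ y : ℝ,
        (Real.sqrt (p (θ₀ + t) (y, g)) - Real.sqrt (p θ₀ (y, g)) -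
          (1 / 2) * t * score θ₀ (y, g) * Real.sqrt (p θ₀ (y, g))) ^ 2)
      =O[nhds 0] fun t : ℝ => t ^ 4 := by
    apply Asymptotics.IsBigO.of_bound (φ * C₁)
    have hmem : Set.Icc (-1:ℝ) 1 ∈ nhds (0:ℝ) := Icc_mem_nhds (by norm_num) (by norm_num)
    filter_upwards [hmem] with t htmem
    have ht : |t| ≤ 1 := abs_le.mpr ⟨htmem.1, htmem.2⟩
    rw [Real.norm_eq_abs, Real.norm_eq_abs,
      abs_of_nonneg (hFnn t), abs_of_nonneg (by positivity : (0:ℝ) ≤ t ^ 4)]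
    calc (∫ g in Set.Icc (0:ℝ) 1, ∫ y : ℝ,
          (Real.sqrt (p (θ₀ + t) (y, g)) - Real.sqrt (p θ₀ (y, g)) -
            (1 / 2) * t * score θ₀ (y, g) * Real.sqrt (p θ₀ (y, g))) ^ 2)
        ≤ t ^ 4 * φ * C₁ := hFle t ht
      _ = φ * C₁ * t ^ 4 := by ring
  exact hBigO.trans_isLittleO (Asymptotics.isLittleO_pow_pow (by norm_num : 2 < 4))
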